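/- Let X be an n × c and Y an n × d real matrix such that XᵀX and YᵀY are positive definite. Then the supremum over nonzero u ∈ ℝ^c and nonzero v ∈ ℝ^d of uᵀXᵀYv / √((uᵀXᵀXu)(vᵀYᵀYv)) is attained and equals the largest singular value of Q = (XᵀX)^{−1/2} XᵀY (YᵀY)^{−1/2}, that is, the square root of the largest eigenvalue of QᵀQ. -/

import Mathlib

open Matrix

open scoped ComplexOrder in
/-- The positive semidefinite square root of a positive semidefinite matrix
(as `Matrix.PosSemidef.sqrt` was defined in Mathlib of December 2024). -/
noncomputable def Matrix.PosSemidef.sqrt {n 𝕜 : Type*} [Fintype n] [DecidableEq n] [RCLike 𝕜]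
    {A : Matrix n n 𝕜} (hA : A.PosSemidef) : Matrix n n 𝕜 :=
  (hA.1.eigenvectorUnitary : Matrix n n 𝕜) *
    diagonal ((↑) ∘ Real.sqrt ∘ hA.1.eigenvalues) *
    (star hA.1.eigenvectorUnitary : Matrix n n 𝕜)

private lemma psd_sqrt_transpose' {k : Type*} [Fintype k] [DecidableEq k] {M : Matrix k k ℝ}
    (hM : M.PosSemidef) : (Matrix.PosSemidef.sqrt hM)ᵀ = Matrix.PosSemidef.sqrt hM := by
  rw [← conjTranspose_eq_transpose_of_trivial]
  simp [Matrix.PosSemidef.sqrt, conjTranspose_mul, Matrix.mul_assoc, Matrix.star_eq_conjTranspose]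

private lemma psd_sqrt_mul_self' {k : Type*} [Fintype k] [DecidableEq k] {M : Matrix k k ℝ}
    (hM : M.PosSemidef) : Matrix.PosSemidef.sqrt hM * Matrix.PosSemidef.sqrt hM = M := by
  have hUU : (star hM.1.eigenvectorUnitary : Matrix k k ℝ) * hM.1.eigenvectorUnitary = 1 :=
    Unitary.coe_star_mul_self _
  have hD : diagonal (RCLike.ofReal ∘ Real.sqrt ∘ hM.1.eigenvalues : k → ℝ) *
      diagonal (RCLike.ofReal ∘ Real.sqrt ∘ hM.1.eigenvalues : k → ℝ) =
      diagonal (RCLike.ofReal ∘ hM.1.eigenvalues : k → ℝ) := by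
    rw [diagonal_mul_diagonal]
    congr 1; ext i
    simp [Real.mul_self_sqrt (hM.eigenvalues_nonneg i)]
  conv_rhs => rw [hM.1.spectral_theorem, Unitary.conjStarAlgAut_apply]
  simp only [Matrix.PosSemidef.sqrt, Matrix.mul_assoc]
  rw [← Matrix.mul_assoc (star _ : Matrix k k ℝ) _ _, hUU, Matrix.one_mul,
    ← Matrix.mul_assoc (diagonal _) (diagonal _), hD]

private lemma dot_self_nonneg' {k : Type*} [Fintype k] (f : k → ℝ) : 0 ≤ f ⬝ᵥ f :=
  Finset.sum_nonneg fun i _ => mul_self_nonneg _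

private lemma dot_self_pos' {k : Type*} [Fintype k] {v : k → ℝ} (hv : v ≠ 0) : 0 < v ⬝ᵥ v :=
  lt_of_le_of_ne (dot_self_nonneg' v) fun h => hv (dotProduct_self_eq_zero.mp h.symm)

private lemma dot_cs' {k : Type*} [Fintype k] (f g : k → ℝ) :
    f ⬝ᵥ g ≤ Real.sqrt (f ⬝ᵥ f) * Real.sqrt (g ⬝ᵥ g) := by
  have h := real_inner_le_norm ((EuclideanSpace.equiv k ℝ).symm f) ((EuclideanSpace.equiv k ℝ).symm g)
  simpa [PiLp.inner_apply, RCLike.inner_apply, EuclideanSpace.norm_eq, dotProduct,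
    Real.norm_eq_abs, sq_abs, sq, mul_comm] using h

private lemma dot_key' {k₁ k₂ k₃ : Type*} [Fintype k₁] [Fintype k₂] [Fintype k₃]
    (N : Matrix k₁ k₂ ℝ) (P : Matrix k₁ k₃ ℝ) (x : k₂ → ℝ) (y : k₃ → ℝ) :
    (N *ᵥ x) ⬝ᵥ (P *ᵥ y) = x ⬝ᵥ (Nᵀ * P) *ᵥ y := by
  rw [← mulVec_mulVec, dotProduct_mulVec x, vecMul_transpose]

private lemma rayleigh' {k : Type*} [Fintype k] [DecidableEq k] {M : Matrix k k ℝ}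
    (hM : M.IsHermitian) {lmax : ℝ} (hl : ∀ i, hM.eigenvalues i ≤ lmax) (v : k → ℝ) :
    v ⬝ᵥ M *ᵥ v ≤ lmax * (v ⬝ᵥ v) := by
  set U := (hM.eigenvectorUnitary : Matrix k k ℝ) with hU
  have hUU : U * star U = 1 := (Unitary.mem_iff.mp hM.eigenvectorUnitary.2).2
  set w := star U *ᵥ v with hw
  have h1 : v ⬝ᵥ M *ᵥ v = ∑ i, hM.eigenvalues i * (w i * w i) := by
    conv_lhs => rw [hM.spectral_theorem, Unitary.conjStarAlgAut_apply]
    have : (RCLike.ofReal ∘ hM.eigenvalues : k → ℝ) = hM.eigenvalues := by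
      ext i; simp
    rw [this, ← mulVec_mulVec, ← mulVec_mulVec, dotProduct_mulVec, ← mulVec_transpose]
    rw [show Uᵀ = star U from (conjTranspose_eq_transpose_of_trivial U).symm]
    simp [mulVec_diagonal, dotProduct, mul_assoc, mul_comm, mul_left_comm]
    rfl
  have h2 : w ⬝ᵥ w = v ⬝ᵥ v := by
    rw [hw, dotProduct_mulVec, ← mulVec_transpose,
      show (star U)ᵀ = U from ?_, mulVec_mulVec, hUU, one_mulVec]
    rw [show star U = Uᴴ from rfl, conjTranspose_eq_transpose_of_trivial, transpose_transpose]
  calc v ⬝ᵥ M *ᵥ v = ∑ i, hM.eigenvalues i * (w i * w i) := h1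
    _ ≤ ∑ i, lmax * (w i * w i) := by
        apply Finset.sum_le_sum; intro i _
        exact mul_le_mul_of_nonneg_right (hl i) (mul_self_nonneg _)
    _ = lmax * (v ⬝ᵥ v) := by rw [← h2]; simp [dotProduct, Finset.mul_sum]

theorem sup_canonical_correlation_eq_largest_singular_value
    (n c d : ℕ) (hc : 1 ≤ c) (hd : 1 ≤ d)
    (X : Matrix (Fin n) (Fin c) ℝ) (Y : Matrix (Fin n) (Fin d) ℝ)
    (hX : (Xᵀ * X).PosDef) (hY : (Yᵀ * Y).PosDef) :
    ∃ σ : ℝ, 0 ≤ σ ∧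
      IsGreatest {r : ℝ | ∃ u : Fin c → ℝ, ∃ v : Fin d → ℝ, u ≠ 0 ∧ v ≠ 0 ∧
          r = (u ⬝ᵥ (Xᵀ * Y).mulVec v)
              / Real.sqrt ((u ⬝ᵥ (Xᵀ * X).mulVec u) * (v ⬝ᵥ (Yᵀ * Y).mulVec v))} σ ∧
      IsGreatest {lam : ℝ | ∃ v : Fin d → ℝ, v ≠ 0 ∧
          ((((Matrix.PosSemidef.sqrt hX.posSemidef)⁻¹ * (Xᵀ * Y) * (Matrix.PosSemidef.sqrt hY.posSemidef)⁻¹)ᵀ *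
            ((Matrix.PosSemidef.sqrt hX.posSemidef)⁻¹ * (Xᵀ * Y) * (Matrix.PosSemidef.sqrt hY.posSemidef)⁻¹)).mulVec v = lam • v)}
        (σ ^ 2) := by
  have hdne : Nonempty (Fin d) := ⟨⟨0, hd⟩⟩
  set A := Matrix.PosSemidef.sqrt hX.posSemidef with hAdef
  set B := Matrix.PosSemidef.sqrt hY.posSemidef with hBdef
  set Q := A⁻¹ * (Xᵀ * Y) * B⁻¹ with hQdef
  -- basic facts about A and B
  have hAh : Aᵀ = A := psd_sqrt_transpose' hX.posSemidef
  have hBh : Bᵀ = B := psd_sqrt_transpose' hY.posSemidef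
  have hAA : A * A = Xᵀ * X := psd_sqrt_mul_self' hX.posSemidef
  have hBB : B * B = Yᵀ * Y := psd_sqrt_mul_self' hY.posSemidef
  have hAu : IsUnit A.det := by
    have : IsUnit (A.det * A.det) := by
      rw [← det_mul, hAA]; exact isUnit_iff_ne_zero.mpr (ne_of_gt hX.det_pos)
    exact isUnit_of_mul_isUnit_left this
  have hBu : IsUnit B.det := by
    have : IsUnit (B.det * B.det) := by
      rw [← det_mul, hBB]; exact isUnit_iff_ne_zero.mpr (ne_of_gt hY.det_pos)
    exact isUnit_of_mul_isUnit_left this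
  have hAAi : A * A⁻¹ = 1 := mul_nonsing_inv A hAu
  have hBiB : B⁻¹ * B = 1 := nonsing_inv_mul B hBu
  have hBBi : B * B⁻¹ = 1 := mul_nonsing_inv B hBu
  have hQB : Q * B = A⁻¹ * (Xᵀ * Y) := by
    rw [hQdef, Matrix.mul_assoc, hBiB, Matrix.mul_one]
  have hAQB : A * (Q * B) = Xᵀ * Y := by
    rw [hQB, ← Matrix.mul_assoc, hAAi, Matrix.one_mul]
  -- the matrix M and its eigen-structure
  set M := Qᵀ * Q with hMdef
  have hMpsd : M.PosSemidef := posSemidef_conjTranspose_mul_self Q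
  have hMH : M.IsHermitian := hMpsd.1
  obtain ⟨i₀, hi₀⟩ := Finite.exists_max hMH.eigenvalues
  set lmax := hMH.eigenvalues i₀ with hlmaxdef
  have hlm0 : 0 ≤ lmax := hMpsd.eigenvalues_nonneg i₀
  set σ := Real.sqrt lmax with hσdef
  have hσ0 : 0 ≤ σ := Real.sqrt_nonneg _
  have hσ2 : σ ^ 2 = lmax := Real.sq_sqrt hlm0
  -- eigenvector for lmax
  set w : Fin d → ℝ := ⇑(hMH.eigenvectorBasis i₀) with hwdef
  have hweig : M *ᵥ w = lmax • w := hMH.mulVec_eigenvectorBasis i₀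
  have hwnorm : w ⬝ᵥ w = 1 := by
    have h1 : ‖hMH.eigenvectorBasis i₀‖ = 1 := hMH.eigenvectorBasis.orthonormal.1 i₀
    have h2 : (inner ℝ (hMH.eigenvectorBasis i₀) (hMH.eigenvectorBasis i₀) : ℝ) = 1 := by
      rw [real_inner_self_eq_norm_sq, h1]; norm_num
    simp only [PiLp.inner_apply, RCLike.inner_apply, conj_trivial] at h2
    simpa [dotProduct] using h2
  have hwne : w ≠ 0 := by
    intro h; rw [h] at hwnorm; simp at hwnorm
  -- key computational identities
  have hqXid : ∀ u : Fin c → ℝ, u ⬝ᵥ (Xᵀ * X) *ᵥ u = (A *ᵥ u) ⬝ᵥ (A *ᵥ u) := by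
    intro u; rw [dot_key', hAh, hAA]
  have hqYid : ∀ v : Fin d → ℝ, v ⬝ᵥ (Yᵀ * Y) *ᵥ v = (B *ᵥ v) ⬝ᵥ (B *ᵥ v) := by
    intro v; rw [dot_key', hBh, hBB]
  have hNid : ∀ (u : Fin c → ℝ) (v : Fin d → ℝ),
      u ⬝ᵥ (Xᵀ * Y) *ᵥ v = (A *ᵥ u) ⬝ᵥ (Q *ᵥ (B *ᵥ v)) := by
    intro u v
    rw [mulVec_mulVec, dot_key', hAh, hAQB]
  have hQbound : ∀ b : Fin d → ℝ, (Q *ᵥ b) ⬝ᵥ (Q *ᵥ b) ≤ lmax * (b ⬝ᵥ b) := by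
    intro b
    rw [dot_key']
    exact rayleigh' hMH hi₀ b
  refine ⟨σ, hσ0, ⟨?_, ?_⟩, ⟨⟨w, hwne, by rw [hσ2]; exact hweig⟩, ?_⟩⟩
  · -- membership in the ratio set
    rcases eq_or_lt_of_le hlm0 with hl0 | hlpos
    · -- lmax = 0
      have hσ0' : σ = 0 := by rw [hσdef, ← hl0, Real.sqrt_zero]
      have hXY0 : ∀ v : Fin d → ℝ, ∀ u : Fin c → ℝ, u ⬝ᵥ (Xᵀ * Y) *ᵥ v = 0 := by
        intro v u
        have h1 := hQbound (B *ᵥ v)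
        rw [← hl0, zero_mul] at h1
        have h2 : Q *ᵥ (B *ᵥ v) = 0 :=
          dotProduct_self_eq_zero.mp (le_antisymm h1 (dot_self_nonneg' _))
        rw [hNid, h2, dotProduct_zero]
      refine ⟨Pi.single ⟨0, hc⟩ 1, Pi.single ⟨0, hd⟩ 1, ?_, ?_, ?_⟩
      · intro h; simpa using congr_fun h ⟨0, hc⟩
      · intro h; simpa using congr_fun h ⟨0, hd⟩
      · rw [hXY0, hσ0', zero_div]
    · -- lmax > 0
      have hσpos : 0 < σ := Real.sqrt_pos.mpr hlpos
      set z := Q *ᵥ w with hzdef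
      have hzz : z ⬝ᵥ z = lmax := by
        rw [hzdef, dot_key', ← hMdef, hweig, dotProduct_smul, smul_eq_mul, hwnorm, mul_one]
      set a : Fin c → ℝ := σ⁻¹ • z with hadef
      have haa : a ⬝ᵥ a = 1 := by
        rw [hadef, smul_dotProduct, dotProduct_smul, hzz, smul_eq_mul, smul_eq_mul,
          ← mul_assoc, ← hσ2]
        field_simp
      refine ⟨A⁻¹ *ᵥ a, B⁻¹ *ᵥ w, ?_, ?_, ?_⟩
      · intro h
        have : A *ᵥ (A⁻¹ *ᵥ a) = 0 := by rw [h, mulVec_zero]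
        rw [mulVec_mulVec, hAAi, one_mulVec] at this
        rw [this] at haa; simp at haa
      · intro h
        have : B *ᵥ (B⁻¹ *ᵥ w) = 0 := by rw [h, mulVec_zero]
        rw [mulVec_mulVec, hBBi, one_mulVec] at this
        exact hwne this
      · have e1 : A *ᵥ (A⁻¹ *ᵥ a) = a := by rw [mulVec_mulVec, hAAi, one_mulVec]
        have e2 : B *ᵥ (B⁻¹ *ᵥ w) = w := by rw [mulVec_mulVec, hBBi, one_mulVec]
        rw [hNid, hqXid, hqYid, e1, e2, ← hzdef, haa, hwnorm, one_mul, Real.sqrt_one,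
          div_one, hadef, smul_dotProduct, smul_eq_mul, hzz, ← hσ2, pow_two,
          inv_mul_cancel_left₀ (ne_of_gt hσpos)]
  · -- upper bound for ratio set
    rintro r ⟨u, v, hu, hv, rfl⟩
    set a := A *ᵥ u with hadef
    set b := B *ᵥ v with hbdef
    have hapos : 0 < a ⬝ᵥ a := by
      rw [← hqXid]
      have := (posDef_iff_dotProduct_mulVec.mp hX).2 hu
      simpa using this
    have hbpos : 0 < b ⬝ᵥ b := by
      rw [← hqYid]
      have := (posDef_iff_dotProduct_mulVec.mp hY).2 hv
      simpa using this
    have hnum : (A *ᵥ u) ⬝ᵥ (Q *ᵥ b) ≤ σ * (Real.sqrt (a ⬝ᵥ a) * Real.sqrt (b ⬝ᵥ b)) := by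
      calc (A *ᵥ u) ⬝ᵥ (Q *ᵥ b)
          ≤ Real.sqrt (a ⬝ᵥ a) * Real.sqrt ((Q *ᵥ b) ⬝ᵥ (Q *ᵥ b)) := dot_cs' _ _
        _ ≤ Real.sqrt (a ⬝ᵥ a) * (σ * Real.sqrt (b ⬝ᵥ b)) := by
            apply mul_le_mul_of_nonneg_left _ (Real.sqrt_nonneg _)
            calc Real.sqrt ((Q *ᵥ b) ⬝ᵥ (Q *ᵥ b))
                ≤ Real.sqrt (lmax * (b ⬝ᵥ b)) := Real.sqrt_le_sqrt (hQbound b)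
              _ = σ * Real.sqrt (b ⬝ᵥ b) := by rw [Real.sqrt_mul hlm0]
        _ = σ * (Real.sqrt (a ⬝ᵥ a) * Real.sqrt (b ⬝ᵥ b)) := by ring
    rw [hNid, hqXid, hqYid, ← hadef, ← hbdef]
    rw [div_le_iff₀ (by positivity)]
    rw [Real.sqrt_mul (le_of_lt hapos)]
    calc a ⬝ᵥ (Q *ᵥ b) ≤ σ * (Real.sqrt (a ⬝ᵥ a) * Real.sqrt (b ⬝ᵥ b)) := hnum
      _ = σ * (Real.sqrt (a ⬝ᵥ a) * Real.sqrt (b ⬝ᵥ b)) := rfl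
  · -- upper bound for eigenvalue set
    rintro lam ⟨v, hv, hveq⟩
    have hvv : 0 < v ⬝ᵥ v := dot_self_pos' hv
    have h1 : v ⬝ᵥ M *ᵥ v = lam * (v ⬝ᵥ v) := by
      rw [hveq, dotProduct_smul, smul_eq_mul]
    have h2 := rayleigh' hMH hi₀ v
    rw [hσ2]
    have : lam * (v ⬝ᵥ v) ≤ lmax * (v ⬝ᵥ v) := by rw [← h1]; exact h2
    exact le_of_mul_le_mul_right this hvv
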